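/- The ΓΓ R-matrix satisfies the Yang–Baxter equation: R₁₂(z₁,z₂)·R₁₃(z₁,z₃)·R₂₃(z₂,z₃) = R₂₃(z₂,z₃)·R₁₃(z₁,z₃)·R₁₂(z₁,z₂) as operators on ℂ²⊗ℂ²⊗ℂ², for all complex v and z₁, z₂, z₃ at which all entries are defined. -/

import Mathlib

open Matrix

/-- The ΓΓ R-matrix on ℂ²⊗ℂ², entries indexed by pairs in Fin 2 × Fin 2
(ordered basis |00⟩,|01⟩,|10⟩,|11⟩). -/
noncomputable def RGG (v z z' : ℂ) : Matrix (Fin 2 × Fin 2) (Fin 2 × Fin 2) ℂ :=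
  fun p q =>
    if p = (0, 0) ∧ q = (0, 0) then 1
    else if p = (0, 1) ∧ q = (0, 1) then (z - z') / (z' - v * z)
    else if p = (0, 1) ∧ q = (1, 0) then (1 - v) * z / (z' - v * z)
    else if p = (1, 0) ∧ q = (0, 1) then (1 - v) * z' / (z' - v * z)
    else if p = (1, 0) ∧ q = (1, 0) then v * (z - z') / (z' - v * z)
    else if p = (1, 1) ∧ q = (1, 1) then (z - v * z') / (z' - v * z)
    else 0

/-- R acting on tensor factors 1 and 2 of ℂ²⊗ℂ²⊗ℂ². -/
noncomputable def R12 (v z z' : ℂ) :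
    Matrix (Fin 2 × Fin 2 × Fin 2) (Fin 2 × Fin 2 × Fin 2) ℂ :=
  fun p q => RGG v z z' (p.1, p.2.1) (q.1, q.2.1) * (if p.2.2 = q.2.2 then 1 else 0)

/-- R acting on tensor factors 1 and 3 of ℂ²⊗ℂ²⊗ℂ². -/
noncomputable def R13 (v z z' : ℂ) :
    Matrix (Fin 2 × Fin 2 × Fin 2) (Fin 2 × Fin 2 × Fin 2) ℂ :=
  fun p q => RGG v z z' (p.1, p.2.2) (q.1, q.2.2) * (if p.2.1 = q.2.1 then 1 else 0)

/-- R acting on tensor factors 2 and 3 of ℂ²⊗ℂ²⊗ℂ². -/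
noncomputable def R23 (v z z' : ℂ) :
    Matrix (Fin 2 × Fin 2 × Fin 2) (Fin 2 × Fin 2 × Fin 2) ℂ :=
  fun p q => RGG v z z' (p.2.1, p.2.2) (q.2.1, q.2.2) * (if p.1 = q.1 then 1 else 0)


lemma rgg_0000 (v z z' : ℂ) : RGG v z z' (0,0) (0,0) = 1 := by
  simp [RGG, Prod.ext_iff]

lemma rgg_0001 (v z z' : ℂ) : RGG v z z' (0,0) (0,1) = 0 := by
  simp [RGG, Prod.ext_iff]

lemma rgg_0010 (v z z' : ℂ) : RGG v z z' (0,0) (1,0) = 0 := by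
  simp [RGG, Prod.ext_iff]

lemma rgg_0011 (v z z' : ℂ) : RGG v z z' (0,0) (1,1) = 0 := by
  simp [RGG, Prod.ext_iff]

lemma rgg_0100 (v z z' : ℂ) : RGG v z z' (0,1) (0,0) = 0 := by
  simp [RGG, Prod.ext_iff]

lemma rgg_0101 (v z z' : ℂ) : RGG v z z' (0,1) (0,1) = (z - z') / (z' - v * z) := by
  simp [RGG, Prod.ext_iff]

lemma rgg_0110 (v z z' : ℂ) : RGG v z z' (0,1) (1,0) = (1 - v) * z / (z' - v * z) := by
  simp [RGG, Prod.ext_iff]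

lemma rgg_0111 (v z z' : ℂ) : RGG v z z' (0,1) (1,1) = 0 := by
  simp [RGG, Prod.ext_iff]

lemma rgg_1000 (v z z' : ℂ) : RGG v z z' (1,0) (0,0) = 0 := by
  simp [RGG, Prod.ext_iff]

lemma rgg_1001 (v z z' : ℂ) : RGG v z z' (1,0) (0,1) = (1 - v) * z' / (z' - v * z) := by
  simp [RGG, Prod.ext_iff]

lemma rgg_1010 (v z z' : ℂ) : RGG v z z' (1,0) (1,0) = v * (z - z') / (z' - v * z) := by
  simp [RGG, Prod.ext_iff]

lemma rgg_1011 (v z z' : ℂ) : RGG v z z' (1,0) (1,1) = 0 := by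
  simp [RGG, Prod.ext_iff]

lemma rgg_1100 (v z z' : ℂ) : RGG v z z' (1,1) (0,0) = 0 := by
  simp [RGG, Prod.ext_iff]

lemma rgg_1101 (v z z' : ℂ) : RGG v z z' (1,1) (0,1) = 0 := by
  simp [RGG, Prod.ext_iff]

lemma rgg_1110 (v z z' : ℂ) : RGG v z z' (1,1) (1,0) = 0 := by
  simp [RGG, Prod.ext_iff]

lemma rgg_1111 (v z z' : ℂ) : RGG v z z' (1,1) (1,1) = (z - v * z') / (z' - v * z) := by
  simp [RGG, Prod.ext_iff]

set_option maxHeartbeats 4000000 in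
/-- Yang–Baxter equation for the ΓΓ R-matrix. -/
theorem gamma_gamma_yang_baxter (v z₁ z₂ z₃ : ℂ)
    (h12 : z₂ - v * z₁ ≠ 0) (h13 : z₃ - v * z₁ ≠ 0) (h23 : z₃ - v * z₂ ≠ 0) :
    R12 v z₁ z₂ * R13 v z₁ z₃ * R23 v z₂ z₃ =
      R23 v z₂ z₃ * R13 v z₁ z₃ * R12 v z₁ z₂ := by
  suffices h : ∀ a b c d e f : Fin 2,
      (R12 v z₁ z₂ * R13 v z₁ z₃ * R23 v z₂ z₃) (a, b, c) (d, e, f) =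
        (R23 v z₂ z₃ * R13 v z₁ z₃ * R12 v z₁ z₂) (a, b, c) (d, e, f) by
    ext ⟨a, b, c⟩ ⟨d, e, f⟩
    exact h a b c d e f
  simp only [Fin.forall_fin_two]
  repeat' apply And.intro
  all_goals
    simp only [Matrix.mul_apply, R12, R13, R23, Fintype.sum_prod_type,
      Fin.sum_univ_two, rgg_0000, rgg_0001, rgg_0010, rgg_0011, rgg_0100, rgg_0101,
      rgg_0110, rgg_0111, rgg_1000, rgg_1001, rgg_1010, rgg_1011, rgg_1100, rgg_1101,
      rgg_1110, rgg_1111, mul_zero, zero_mul, mul_one, one_mul, add_zero, zero_add,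
      Fin.isValue, if_true, if_false, one_ne_zero, zero_ne_one, ite_true, ite_false]
  all_goals try field_simp
  all_goals try (have h13' : z₃ - z₁ * v ≠ 0 := (by rwa [mul_comm]); have h12' : z₂ - z₁ * v ≠ 0 := (by rwa [mul_comm]); field_simp)
  all_goals try ring
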